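/- arXiv:2403.19401 — 4 statements merged into one kernel-verified Lean document; each statement's English description precedes it below -/
import Mathlib

section
/- Fix M ≥ 1, q ≥ 2, and a parity h(x) = c₀ ⊕ ⊕_{i=1}^M c_i·x_i on F₂^M with K = |{i : c_i = 1}|. Under the dictatorship-test distribution (for each i ∈ [M], independently set exactly one of q points to 1 in coordinate i, uniformly), the probability that exactly one of h(x^{(1)}), …, h(x^{(q)}) equals 1 is at most q/2^{q−1} + exp(−2K/q + q/2). -/
open Finset

lemma ind_eq (a : ZMod 2) (n : ℕ) :
    (if (n : ZMod 2) = a then (1:ℝ) else 0) = (1 + (-1)^(a.val) * (-1)^n)/2 := by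
  have hmm : ∀ m : ℕ, ((m : ZMod 2) + m = 0) := fun m => CharTwo.add_self_eq_zero _
  have h2 : (2 : ZMod 2) = 0 := by decide
  have hpow : ∀ m : ℕ, ((-1:ℝ))^m * (-1)^m = 1 := by
    intro m; rw [← mul_pow]; norm_num
  have ha : a = 0 ∨ a = 1 := by fin_cases a <;> [exact Or.inl rfl; exact Or.inr rfl]
  obtain ⟨m, rfl⟩ | ⟨m, rfl⟩ := Nat.even_or_odd n <;>
    obtain rfl | rfl := ha <;>
    push_cast <;>
    simp [pow_add, pow_mul, ZMod.val_one, hmm, hpow, h2] <;>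
    norm_num [hmm, hpow, h2]

lemma char_sum (M q K : ℕ) (S : Finset (Fin M)) (hS : S.card = K) (T : Finset (Fin q)) :
    ∑ σ : Fin M → Fin q, (-1:ℝ)^((S.filter (fun i => σ i ∈ T)).card)
      = ((q:ℝ) - 2*T.card)^K * (q:ℝ)^(M-K) := by
  have hTq : T.card ≤ q := by simpa using T.card_le_univ
  have step1 : ∀ σ : Fin M → Fin q,
      (-1:ℝ)^((S.filter (fun i => σ i ∈ T)).card)
        = ∏ i : Fin M, (if i ∈ S ∧ σ i ∈ T then (-1:ℝ) else 1) := by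
    intro σ
    rw [Finset.prod_ite, Finset.prod_const, Finset.prod_const, one_pow, mul_one]
    congr 1
    congr 1
    ext i
    simp
  simp_rw [step1]
  rw [show (univ : Finset (Fin M → Fin q)) = Fintype.piFinset (fun _ => univ) from
    (Fintype.piFinset_univ).symm,
    ← Finset.prod_univ_sum (fun _ => (univ : Finset (Fin q)))
      (fun i v => if i ∈ S ∧ v ∈ T then (-1:ℝ) else 1)]
  have inner : ∀ i : Fin M, (∑ v : Fin q, (if i ∈ S ∧ v ∈ T then (-1:ℝ) else 1))
      = if i ∈ S then ((q:ℝ) - 2*T.card) else (q:ℝ) := by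
    intro i
    by_cases hi : i ∈ S
    · simp only [hi, true_and, if_pos]
      rw [Finset.sum_ite, Finset.sum_const, Finset.sum_const]
      have h1 : (univ.filter (fun v : Fin q => v ∈ T)) = T := by ext v; simp
      have h2 : (univ.filter (fun v : Fin q => v ∉ T)).card = q - T.card := by
        rw [Finset.filter_not, Finset.card_sdiff_of_subset (by simp [h1, Finset.subset_univ])]
        simp [h1]
      rw [h1, h2]
      rw [nsmul_eq_mul, nsmul_eq_mul, Nat.cast_sub hTq]
      ring
    · simp [hi]
  simp_rw [inner]
  rw [Finset.prod_ite, Finset.prod_const, Finset.prod_const]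
  have h1 : (univ.filter (fun i : Fin M => i ∈ S)) = S := by ext v; simp
  have h2 : (univ.filter (fun i : Fin M => i ∉ S)).card = M - K := by
    rw [Finset.filter_not, Finset.card_sdiff_of_subset (by simp [h1, Finset.subset_univ])]
    simp [h1, hS]
  rw [h1, h2, hS]

lemma Fcount (M q K : ℕ) (hq : 2 ≤ q) (S : Finset (Fin M)) (hS : S.card = K)
    (c₀ : ZMod 2) (j : Fin q) :
    ((univ.filter (fun σ : Fin M → Fin q =>
        ∀ k, k ≠ j → (((S.filter (fun i => σ i = k)).card : ZMod 2) = c₀))).card : ℝ)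
      ≤ (q:ℝ)^M / 2^(q-1) + ((q:ℝ)-2)^K * (q:ℝ)^(M-K) := by
  set E : Finset (Fin q) := univ.erase j with hEdef
  have hE : E.card = q - 1 := by simp [hEdef]
  set ε : ℝ := (-1)^(c₀.val) with hεdef
  set N : Fin q → (Fin M → Fin q) → ℕ := fun k σ => (S.filter (fun i => σ i = k)).card with hN
  -- step 1: card as a sum of products of indicators
  have step1 : ((univ.filter (fun σ : Fin M → Fin q =>
        ∀ k, k ≠ j → ((N k σ : ZMod 2) = c₀))).card : ℝ)
      = ∑ σ : Fin M → Fin q, ∏ k ∈ E, ((1 + ε * (-1)^(N k σ))/2) := by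
    rw [← Finset.sum_boole]
    apply Finset.sum_congr rfl
    intro σ _
    have : (∀ k, k ≠ j → ((N k σ : ZMod 2) = c₀)) ↔
        (∀ k ∈ E, ((N k σ : ZMod 2) = c₀)) := by
      simp [hEdef]
    simp_rw [this]
    rw [eq_comm]
    calc ∏ k ∈ E, ((1 + ε * (-1)^(N k σ))/2)
        = ∏ k ∈ E, (if ((N k σ : ZMod 2) = c₀) then (1:ℝ) else 0) := by
          apply Finset.prod_congr rfl
          intro k _
          rw [ind_eq, hεdef]
      _ = _ := by
          rw [Finset.prod_boole]
          by_cases hP : ∀ k ∈ E, ((N k σ : ZMod 2) = c₀) <;> simp [hP]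
  -- step 2: expand the product
  have step2 : ∀ σ : Fin M → Fin q,
      ∏ k ∈ E, ((1 + ε * (-1)^(N k σ))/2)
        = (∑ T ∈ E.powerset, ε ^ T.card *
            (-1:ℝ)^((S.filter (fun i => σ i ∈ T)).card)) / 2^(q-1) := by
    intro σ
    rw [Finset.prod_div_distrib, Finset.prod_const, hE]
    congr 1
    simp_rw [add_comm (1:ℝ)]
    rw [Finset.prod_add]
    apply Finset.sum_congr rfl
    intro T hT
    rw [Finset.mem_powerset] at hT
    rw [Finset.prod_const_one, mul_one, Finset.prod_mul_distrib, Finset.prod_const,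
      Finset.prod_pow_eq_pow_sum]
    congr 2
    rw [Finset.card_eq_sum_card_fiberwise (f := σ) (s := S.filter (fun i => σ i ∈ T)) (t := T) (fun i hi => (Finset.mem_filter.mp hi).2)]
    apply Finset.sum_congr rfl
    intro k hk
    show (S.filter (fun i => σ i = k)).card = _
    congr 1
    rw [Finset.filter_filter]
    ext i
    simp only [Finset.mem_filter]
    constructor
    · rintro ⟨h1, h3⟩; exact ⟨h1, h3 ▸ hk, h3⟩
    · rintro ⟨h1, _, h3⟩; exact ⟨h1, h3⟩
  -- step 3: swap sums, apply char_sum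
  have step3 : ((univ.filter (fun σ : Fin M → Fin q =>
        ∀ k, k ≠ j → ((N k σ : ZMod 2) = c₀))).card : ℝ)
      = (∑ T ∈ E.powerset, ε ^ T.card * ((q:ℝ) - 2*T.card)^K * (q:ℝ)^(M-K)) / 2^(q-1) := by
    rw [step1]
    simp_rw [step2]
    rw [← Finset.sum_div]
    congr 1
    rw [Finset.sum_comm]
    apply Finset.sum_congr rfl
    intro T _
    rw [← Finset.mul_sum, char_sum M q K S hS T, mul_assoc]
  -- step 4: bound the sum
  have hq2 : (0:ℝ) ≤ (q:ℝ) - 2 := by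
    have : (2:ℝ) ≤ (q:ℝ) := by exact_mod_cast hq
    linarith
  have habs : ∀ T ∈ E.powerset,
      ε ^ T.card * ((q:ℝ) - 2*T.card)^K * (q:ℝ)^(M-K)
        ≤ if T = ∅ then (q:ℝ)^M else ((q:ℝ)-2)^K * (q:ℝ)^(M-K) := by
    intro T hT
    rw [Finset.mem_powerset] at hT
    by_cases h0 : T = ∅
    · subst h0
      simp only [if_pos rfl, Finset.card_empty, pow_zero, one_mul, Nat.cast_zero, mul_zero,
        sub_zero, if_true]
      rw [← pow_add]
      have hKM : K ≤ M := hS ▸ le_trans (Finset.card_le_card (Finset.subset_univ S)) (by simp)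
      rw [Nat.add_sub_cancel' hKM]
    · rw [if_neg h0]
      have h1 : 1 ≤ T.card := Finset.card_pos.mpr (Finset.nonempty_iff_ne_empty.mpr h0)
      have h2 : T.card ≤ q - 1 := hE ▸ Finset.card_le_card hT
      have h2' : (T.card : ℝ) ≤ (q:ℝ) - 1 := by
        have := Nat.cast_le (α := ℝ) |>.mpr h2
        rwa [Nat.cast_sub (by omega), Nat.cast_one] at this
      have h1' : (1:ℝ) ≤ (T.card : ℝ) := by exact_mod_cast h1
      have hε1 : |ε| ^ T.card = 1 := by
        rw [hεdef, abs_pow, abs_neg, abs_one, one_pow, one_pow]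
      have hb : |(q:ℝ) - 2*T.card| ≤ (q:ℝ) - 2 := by
        rw [abs_le]
        constructor <;> nlinarith
      calc ε ^ T.card * ((q:ℝ) - 2*T.card)^K * (q:ℝ)^(M-K)
          ≤ |ε ^ T.card * ((q:ℝ) - 2*T.card)^K * (q:ℝ)^(M-K)| := le_abs_self _
        _ = |ε| ^ T.card * (|(q:ℝ) - 2*T.card|^K * (q:ℝ)^(M-K)) := by
            rw [abs_mul, abs_mul, abs_pow ε, abs_pow ((q:ℝ) - 2*(T.card:ℝ)),
              abs_of_nonneg (by positivity : (0:ℝ) ≤ (q:ℝ)^(M-K)), mul_assoc]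
        _ = |(q:ℝ) - 2*T.card|^K * (q:ℝ)^(M-K) := by rw [hε1, one_mul]
        _ ≤ ((q:ℝ)-2)^K * (q:ℝ)^(M-K) :=
            mul_le_mul_of_nonneg_right (pow_le_pow_left₀ (abs_nonneg _) hb K) (by positivity)
  have hsum : (∑ T ∈ E.powerset, ε ^ T.card * ((q:ℝ) - 2*T.card)^K * (q:ℝ)^(M-K))
      ≤ (q:ℝ)^M + 2^(q-1) * (((q:ℝ)-2)^K * (q:ℝ)^(M-K)) := by
    calc _ ≤ ∑ T ∈ E.powerset, (if T = ∅ then (q:ℝ)^M else ((q:ℝ)-2)^K * (q:ℝ)^(M-K)) :=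
          Finset.sum_le_sum habs
      _ ≤ _ := by
          rw [← Finset.insert_erase (Finset.empty_mem_powerset E), Finset.sum_insert
            (Finset.notMem_erase _ _)]
          rw [if_pos rfl]
          apply add_le_add_right
          calc ∑ T ∈ (E.powerset.erase ∅), (if T = ∅ then (q:ℝ)^M else ((q:ℝ)-2)^K * (q:ℝ)^(M-K))
              = ∑ T ∈ (E.powerset.erase ∅), ((q:ℝ)-2)^K * (q:ℝ)^(M-K) := by
                apply Finset.sum_congr rfl
                intro T hT
                rw [if_neg (Finset.ne_of_mem_erase hT)]
            _ = ((E.powerset.erase ∅).card : ℝ) * (((q:ℝ)-2)^K * (q:ℝ)^(M-K)) := by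
                rw [Finset.sum_const, nsmul_eq_mul]
            _ ≤ _ := by
                apply mul_le_mul_of_nonneg_right _ (mul_nonneg (pow_nonneg hq2 _) (by positivity))
                have : (E.powerset.erase ∅).card ≤ 2^(q-1) := by
                  calc (E.powerset.erase ∅).card ≤ E.powerset.card := Finset.card_erase_le
                    _ = 2^(q-1) := by rw [Finset.card_powerset, hE]
                calc ((E.powerset.erase ∅).card : ℝ) ≤ ((2^(q-1) : ℕ) : ℝ) := by exact_mod_cast this
                  _ = 2^(q-1) := by push_cast; ring
  show ((univ.filter (fun σ : Fin M → Fin q =>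
      ∀ k, k ≠ j → ((N k σ : ZMod 2) = c₀))).card : ℝ) ≤ _
  rw [step3]
  rw [div_le_iff₀ (by positivity : (0:ℝ) < 2^(q-1))]
  calc (∑ T ∈ E.powerset, ε ^ T.card * ((q:ℝ) - 2*T.card)^K * (q:ℝ)^(M-K))
      ≤ (q:ℝ)^M + 2^(q-1) * (((q:ℝ)-2)^K * (q:ℝ)^(M-K)) := hsum
    _ = ((q:ℝ)^M / 2^(q-1) + ((q:ℝ)-2)^K * (q:ℝ)^(M-K)) * 2^(q-1) := by
        field_simp

lemma anal (q K : ℕ) (hq : 2 ≤ q) :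
    (q:ℝ) * (((q:ℝ)-2)/(q:ℝ))^K ≤ Real.exp (-(2*K)/q + q/2) := by
  have hq0 : (0:ℝ) < q := by positivity
  have hq2 : (2:ℝ) ≤ (q:ℝ) := by exact_mod_cast hq
  have h1 : ((q:ℝ)-2)/q ≤ Real.exp (-(2/q)) := by
    have h := Real.add_one_le_exp (-(2/(q:ℝ)))
    calc ((q:ℝ)-2)/q = -(2/q) + 1 := by field_simp; ring
      _ ≤ _ := h
  have hb0 : (0:ℝ) ≤ ((q:ℝ)-2)/q := div_nonneg (by linarith) hq0.le
  have h1' : (((q:ℝ)-2)/q)^K ≤ Real.exp (-(2/q))^K :=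
    pow_le_pow_left₀ hb0 h1 K
  have h2 : (q:ℝ) ≤ Real.exp ((q:ℝ)/2) := by
    have e1 : (1:ℝ) + (q:ℝ)/4 ≤ Real.exp ((q:ℝ)/4) := by
      linarith [Real.add_one_le_exp ((q:ℝ)/4)]
    calc (q:ℝ) ≤ (1 + (q:ℝ)/4)^2 := by nlinarith [sq_nonneg ((q:ℝ)/4 - 1)]
      _ ≤ Real.exp ((q:ℝ)/4)^2 := pow_le_pow_left₀ (by positivity) e1 2
      _ = Real.exp ((q:ℝ)/2) := by
          rw [← Real.exp_nat_mul]
          congr 1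
          push_cast
          ring
  calc (q:ℝ) * (((q:ℝ)-2)/(q:ℝ))^K
      ≤ Real.exp ((q:ℝ)/2) * Real.exp (-(2/q))^K :=
        mul_le_mul h2 h1' (pow_nonneg hb0 K) (le_of_lt (Real.exp_pos _))
    _ = Real.exp (-(2*K)/q + q/2) := by
        rw [← Real.exp_nat_mul, ← Real.exp_add]
        congr 1
        field_simp
        ring


/-- soundness of the dictatorship test: For a parity
`h(x) = c₀ ⊕ ⊕_i c_i x_i` on `F₂^M` with `K = |{i : c_i = 1}|`, under the
dictatorship-test distribution (uniform over `σ : [M] → [q]`, where point `σ(i)` gets a `1`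
in coordinate `i`), the probability that exactly one of `h(x^{(1)}), …, h(x^{(q)})` equals
`1` is at most `q/2^{q−1} + exp(−2K/q + q/2)`. -/
theorem stmt7 (M q : ℕ) (hM : 1 ≤ M) (hq : 2 ≤ q)
    (c₀ : ZMod 2) (c : Fin M → ZMod 2) (K : ℕ)
    (hK : K = ((univ : Finset (Fin M)).filter (fun i => c i = 1)).card)
    (x : (Fin M → Fin q) → Fin q → Fin M → ZMod 2)
    (hx : ∀ σ j i, x σ j i = if σ i = j then 1 else 0)
    (h : (Fin M → ZMod 2) → ZMod 2)
    (hh : ∀ y, h y = c₀ + ∑ i, c i * y i) :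
    (((univ : Finset (Fin M → Fin q)).filter
        (fun σ => ((univ : Finset (Fin q)).filter (fun j => h (x σ j) = 1)).card = 1)).card : ℝ)
        / (q : ℝ) ^ M
      ≤ (q : ℝ) / 2 ^ (q - 1) + Real.exp (-(2 * K) / q + q / 2) := by
  classical
  set S : Finset (Fin M) := univ.filter (fun i => c i = 1) with hSdef
  have hS : S.card = K := hK.symm
  have hKM : K ≤ M := by
    rw [hK]
    calc _ ≤ (univ : Finset (Fin M)).card := Finset.card_filter_le _ _
      _ = M := by simp
  have hq0 : (0:ℝ) < (q:ℝ) := by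
    have : (0:ℕ) < q := by omega
    exact_mod_cast this
  -- express h (x σ k) via the fiber count
  have hNval : ∀ (σ : Fin M → Fin q) (k : Fin q),
      h (x σ k) = c₀ + (((S.filter (fun i => σ i = k)).card : ZMod 2)) := by
    intro σ k
    rw [hh]
    congr 1
    have hterm : ∀ i : Fin M, c i * x σ k i = if (c i = 1 ∧ σ i = k) then 1 else 0 := by
      intro i
      rw [hx]
      have hci : c i = 0 ∨ c i = 1 := by
        rcases (show ∀ z : ZMod 2, z = 0 ∨ z = 1 by decide) (c i) with hz|hz <;> [left; right] <;>
          exact hz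
      rcases hci with hz|hz <;> split_ifs with h1 h2 <;> simp_all
    rw [Finset.sum_congr rfl (fun i _ => hterm i), Finset.sum_boole]
    congr 1
    rw [hSdef, Finset.filter_filter]
  -- the event is contained in the union of the F_j's
  set F : Fin q → Finset (Fin M → Fin q) := fun j =>
    univ.filter (fun σ => ∀ k, k ≠ j →
      (((S.filter (fun i => σ i = k)).card : ZMod 2) = c₀)) with hFdef
  have hsub : (univ.filter
        (fun σ : Fin M → Fin q => ((univ : Finset (Fin q)).filter (fun j => h (x σ j) = 1)).card = 1))
      ⊆ univ.biUnion F := by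
    intro σ hσ
    rw [Finset.mem_filter] at hσ
    obtain ⟨j, hj⟩ := Finset.card_eq_one.mp hσ.2
    refine Finset.mem_biUnion.mpr ⟨j, Finset.mem_univ j,
      Finset.mem_filter.mpr ⟨Finset.mem_univ σ, ?_⟩⟩
    intro k hk
    have hkj : k ∉ ((univ : Finset (Fin q)).filter (fun j => h (x σ j) = 1)) := by
      rw [hj]
      simp [hk]
    have hne : ¬ (h (x σ k) = 1) := by
      intro hc
      exact hkj (Finset.mem_filter.mpr ⟨Finset.mem_univ k, hc⟩)
    have h0 : h (x σ k) = 0 := by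
      rcases (show ∀ z : ZMod 2, z = 0 ∨ z = 1 by decide) (h (x σ k)) with hz|hz
      · exact hz
      · exact absurd hz hne
    rw [hNval σ k] at h0
    exact (show ∀ a b : ZMod 2, a + b = 0 → b = a by decide) _ _ h0
  -- count
  set B : ℝ := ((q:ℝ)-2)^K * (q:ℝ)^(M-K) with hBdef
  have hcard : ((univ.filter
        (fun σ : Fin M → Fin q => ((univ : Finset (Fin q)).filter (fun j => h (x σ j) = 1)).card = 1)).card : ℝ)
      ≤ (q:ℝ) * ((q:ℝ)^M / 2^(q-1) + B) := by
    calc ((univ.filter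
        (fun σ : Fin M → Fin q => ((univ : Finset (Fin q)).filter (fun j => h (x σ j) = 1)).card = 1)).card : ℝ)
        ≤ ((univ.biUnion F).card : ℝ) := by exact_mod_cast Finset.card_le_card hsub
      _ ≤ ((∑ j : Fin q, (F j).card : ℕ) : ℝ) := by exact_mod_cast Finset.card_biUnion_le
      _ = ∑ j : Fin q, ((F j).card : ℝ) := by push_cast; ring
      _ ≤ ∑ j : Fin q, ((q:ℝ)^M / 2^(q-1) + B) := by
          apply Finset.sum_le_sum
          intro j _
          exact Fcount M q K hq S hS c₀ j
      _ = (q:ℝ) * ((q:ℝ)^M / 2^(q-1) + B) := by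
          rw [Finset.sum_const, Finset.card_univ, Fintype.card_fin, nsmul_eq_mul]
  have hqM : (q:ℝ)^M = (q:ℝ)^(M-K) * (q:ℝ)^K := by
    rw [← pow_add, Nat.sub_add_cancel hKM]
  have hBq : (q:ℝ) * B / (q:ℝ)^M = (q:ℝ) * (((q:ℝ)-2)/(q:ℝ))^K := by
    rw [hBdef, hqM, div_pow]
    have hqK : (0:ℝ) < (q:ℝ)^K := by positivity
    have hqMK : (0:ℝ) < (q:ℝ)^(M-K) := by positivity
    field_simp
  calc (((univ : Finset (Fin M → Fin q)).filter
        (fun σ => ((univ : Finset (Fin q)).filter (fun j => h (x σ j) = 1)).card = 1)).card : ℝ)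
        / (q : ℝ) ^ M
      ≤ ((q:ℝ) * ((q:ℝ)^M / 2^(q-1) + B)) / (q:ℝ)^M := by
        apply div_le_div_of_nonneg_right hcard (by positivity)
    _ = (q:ℝ) / 2^(q-1) + (q:ℝ) * B / (q:ℝ)^M := by
        field_simp
    _ = (q:ℝ) / 2^(q-1) + (q:ℝ) * (((q:ℝ)-2)/(q:ℝ))^K := by rw [hBq]
    _ ≤ (q:ℝ) / 2^(q-1) + Real.exp (-(2*K)/q + q/2) := by
        have := anal q K hq
        linarith
end

section
/- For any strict nonempty subset S ⊊ [q] with |S| = s, and Z_j = h(x^{(j)}) as in the dictatorship test with K active coordinates, min(s, q−s) ≥ 1 implies |Pr[⊕_{j∈S} Z_j = 0] − 1/2| ≤ (1/2)·exp(−2K/q). -/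
open Finset

noncomputable def chi (a : ZMod 2) : ℝ := if a = 0 then 1 else -1

lemma chi_add (a b : ZMod 2) : chi (a + b) = chi a * chi b := by
  have h11 : (1 : ZMod 2) + 1 = 0 := by decide
  have e : ∀ z : ZMod 2, z = 0 ∨ z = 1 := by decide
  rcases e a with rfl | rfl <;> rcases e b with rfl | rfl <;> simp [chi, h11]

lemma chi_abs (a : ZMod 2) : |chi a| = 1 := by
  have e : ∀ z : ZMod 2, z = 0 ∨ z = 1 := by decide
  rcases e a with rfl | rfl <;> norm_num [chi]

lemma zmod2_cases (a : ZMod 2) : a = 0 ∨ a = 1 := by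
  fin_cases a
  · left; rfl
  · right; rfl

lemma chi_sum {ι : Type*} (t : Finset ι) (f : ι → ZMod 2) :
    chi (∑ i ∈ t, f i) = ∏ i ∈ t, chi (f i) := by
  induction t using Finset.cons_induction with
  | empty => simp [chi]
  | cons a t ha ih => rw [Finset.sum_cons, Finset.prod_cons, chi_add, ih]

/-- For any strict nonempty subset `S ⊊ [q]` with `|S| = s` (so
`min(s, q−s) ≥ 1`), and `Z_j = h(x^{(j)})` as in the dictatorship test (uniform over
`σ : [M] → [q]`) with `K` active coordinates,
`|Pr[⊕_{j∈S} Z_j = 0] − 1/2| ≤ (1/2)·exp(−2K/q)`. -/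
theorem stmt8 (M q : ℕ) (hM : 1 ≤ M) (hq : 2 ≤ q)
    (c₀ : ZMod 2) (c : Fin M → ZMod 2) (K : ℕ)
    (hK : K = ((univ : Finset (Fin M)).filter (fun i => c i = 1)).card)
    (x : (Fin M → Fin q) → Fin q → Fin M → ZMod 2)
    (hx : ∀ σ j i, x σ j i = if σ i = j then 1 else 0)
    (h : (Fin M → ZMod 2) → ZMod 2)
    (hh : ∀ y, h y = c₀ + ∑ i, c i * y i)
    (S : Finset (Fin q)) (hS : S.Nonempty) (hSstrict : S ⊂ univ)
    (s : ℕ) (hs : s = S.card) (hmin : 1 ≤ min s (q - s)) :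
    |(((univ : Finset (Fin M → Fin q)).filter
        (fun σ => ∑ j ∈ S, h (x σ j) = 0)).card : ℝ) / (q : ℝ) ^ M - 1 / 2|
      ≤ (1 / 2) * Real.exp (-(2 * K) / q) := by
  have hq0 : (0:ℝ) < (q:ℝ) := by positivity
  -- Step A : rewrite the test value
  have hF : ∀ σ : Fin M → Fin q, (∑ j ∈ S, h (x σ j))
      = S.card • c₀ + ∑ i, c i * (if σ i ∈ S then 1 else 0) := by
    intro σ
    simp only [hh, hx, Finset.sum_add_distrib, Finset.sum_const]
    congr 1
    rw [Finset.sum_comm]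
    refine Finset.sum_congr rfl fun i _ => ?_
    rw [← Finset.mul_sum, Finset.sum_ite_eq S (σ i) (fun _ => (1 : ZMod 2))]
  set G : (Fin M → Fin q) → ZMod 2 :=
    fun σ => S.card • c₀ + ∑ i, c i * (if σ i ∈ S then 1 else 0) with hG
  have hcardF : Fintype.card (Fin M → Fin q) = q ^ M := by
    simp [Fintype.card_fun]
  have hqM : (0:ℝ) < (q:ℝ) ^ M := by positivity
  -- Step B : count as character sum
  have hcard : (((univ : Finset (Fin M → Fin q)).filter
        (fun σ => ∑ j ∈ S, h (x σ j) = 0)).card : ℝ)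
      = ((q:ℝ) ^ M + ∑ σ : Fin M → Fin q, chi (G σ)) / 2 := by
    have h1 : ∀ σ : Fin M → Fin q,
        (if (∑ j ∈ S, h (x σ j)) = 0 then (1:ℝ) else 0) = (1 + chi (G σ)) / 2 := by
      intro σ
      by_cases h0 : G σ = 0
      · rw [if_pos (by rw [hF σ]; exact h0), h0]
        norm_num [chi]
      · rw [if_neg (by rw [hF σ]; exact h0)]
        simp [chi, h0]
    rw [← Finset.sum_boole]
    rw [Finset.sum_congr rfl (fun σ _ => h1 σ), ← Finset.sum_div,
      Finset.sum_add_distrib, Finset.sum_const, Finset.card_univ, hcardF]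
    push_cast
    ring
  -- Step C : compute the character sum
  have hT : ∑ σ : Fin M → Fin q, chi (G σ)
      = chi (S.card • c₀) * (((q:ℝ) - 2 * s) ^ K * (q:ℝ) ^ (M - K)) := by
    have h2 : ∀ σ : Fin M → Fin q, chi (G σ)
        = chi (S.card • c₀) * ∏ i, chi (c i * (if σ i ∈ S then 1 else 0)) := by
      intro σ
      rw [hG]
      simp only
      rw [chi_add, chi_sum]
    rw [Finset.sum_congr rfl (fun σ _ => h2 σ), ← Finset.mul_sum]
    congr 1
    have h3 : ∑ σ : Fin M → Fin q, ∏ i, chi (c i * (if σ i ∈ S then 1 else 0))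
        = ∏ i, ∑ j : Fin q, chi (c i * (if j ∈ S then 1 else 0)) := by
      rw [← Finset.sum_prod_piFinset (univ : Finset (Fin q))
        (fun i j => chi (c i * (if j ∈ S then 1 else 0))), Fintype.piFinset_univ]
    rw [h3]
    have h4 : ∀ i : Fin M, (∑ j : Fin q, chi (c i * (if j ∈ S then 1 else 0)))
        = if c i = 1 then ((q:ℝ) - 2 * s) else (q:ℝ) := by
      intro i
      by_cases hc : c i = 1
      · rw [if_pos hc]
        have hterm : ∀ j : Fin q, chi (c i * (if j ∈ S then 1 else 0))
            = 1 - 2 * (if j ∈ S then (1:ℝ) else 0) := by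
          intro j; by_cases hj : j ∈ S <;> norm_num [chi, hc, hj]
        rw [Finset.sum_congr rfl (fun j _ => hterm j), Finset.sum_sub_distrib,
          Finset.sum_const, Finset.card_univ, ← Finset.mul_sum, Finset.sum_boole,
          Finset.filter_univ_mem]
        simp [hs]
      · rcases zmod2_cases (c i) with hc0 | hc0
        · rw [if_neg hc]
          simp [chi, hc0]
        · exact absurd hc0 hc
    rw [Finset.prod_congr rfl (fun i _ => h4 i), Finset.prod_ite,
      Finset.prod_const, Finset.prod_const, hK]
    congr 2
    have := Finset.card_filter_add_card_filter_not
      (s := (univ : Finset (Fin M))) (p := fun i => c i = 1)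
    rw [Finset.card_univ, Fintype.card_fin] at this
    omega
  -- Step D : the bound
  have hKM : K ≤ M := by
    rw [hK]
    calc ((univ : Finset (Fin M)).filter (fun i => c i = 1)).card
        ≤ (univ : Finset (Fin M)).card := Finset.card_filter_le _ _
      _ = M := by simp
  have hs1 : 1 ≤ s := le_trans hmin (min_le_left _ _)
  have hsq : s + 1 ≤ q := by
    have h1 : 1 ≤ q - s := le_trans hmin (min_le_right _ _)
    have h2 : s ≤ q := by
      rw [hs]
      calc S.card ≤ (univ : Finset (Fin q)).card := Finset.card_le_card hSstrict.1
        _ = q := by simp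
    omega
  have habs : |(q:ℝ) - 2 * s| ≤ (q:ℝ) - 2 := by
    rw [abs_le]
    constructor
    · have : (s:ℝ) + 1 ≤ q := by exact_mod_cast hsq
      nlinarith
    · have : (1:ℝ) ≤ s := by exact_mod_cast hs1
      nlinarith
  have hexp : |(q:ℝ) - 2 * s| / q ≤ Real.exp (-2 / q) := by
    calc |(q:ℝ) - 2 * s| / q ≤ ((q:ℝ) - 2) / q := by gcongr
      _ = 1 + -2 / q := by field_simp; ring
      _ ≤ Real.exp (-2 / q) := by
          have := Real.add_one_le_exp (-2 / (q:ℝ))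
          linarith
  rw [hcard, hT]
  have key : ((q:ℝ)^M + chi (S.card • c₀) * (((q:ℝ) - 2*s)^K * (q:ℝ)^(M-K)))/2 / (q:ℝ)^M
        - 1/2
      = chi (S.card • c₀) * (((q:ℝ)-2*s)^K * (q:ℝ)^(M-K)) / (2*(q:ℝ)^M) := by
    field_simp
    ring
  rw [key, abs_div, abs_mul, chi_abs, one_mul, abs_mul, abs_pow, abs_pow,
    abs_of_pos hq0, abs_of_pos (by positivity : (0:ℝ) < 2*(q:ℝ)^M)]
  have hpow : (q:ℝ)^M = (q:ℝ)^K * (q:ℝ)^(M-K) := by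
    rw [← pow_add]
    congr 1
    omega
  rw [hpow]
  have hstep : |(q:ℝ)-2*s|^K * (q:ℝ)^(M-K) / (2*((q:ℝ)^K*(q:ℝ)^(M-K)))
      = (1/2) * (|(q:ℝ)-2*s|/q)^K := by
    rw [div_pow]
    field_simp
  rw [hstep]
  have hp : (|(q:ℝ)-2*s|/q)^K ≤ Real.exp (-2/q) ^ K :=
    pow_le_pow_left₀ (by positivity) hexp K
  have hexpK : Real.exp (-2/(q:ℝ)) ^ K = Real.exp (-(2*K)/q) := by
    rw [← Real.exp_nat_mul]
    congr 1
    ring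
  rw [← hexpK]
  linarith
end

section
/- Let F ⊆ F₂^t be a nonempty affine subspace contained in a fixed-parity hyperplane {z : ⊕ᵢ zᵢ = b}, and let 1 ≤ w ≤ t−1 with b ≡ w (mod 2) and suppose F contains at least one vector of Hamming weight w. Then the probability that a uniformly random element of F has Hamming weight exactly w is at least 1/2^{t−2}. -/
open Finset

noncomputable def Lsum (t : ℕ) : (Fin t → ZMod 2) →ₗ[ZMod 2] ZMod 2 :=
  ∑ i, LinearMap.proj i

lemma Lsum_apply (t : ℕ) (z : Fin t → ZMod 2) : Lsum t z = ∑ i, z i := by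
  simp [Lsum]

lemma finrank_ker_Lsum (t : ℕ) (ht : 1 ≤ t) :
    Module.finrank (ZMod 2) (LinearMap.ker (Lsum t)) = t - 1 := by
  have hsurj : LinearMap.range (Lsum t) = ⊤ := by
    rw [LinearMap.range_eq_top]
    intro c
    exact ⟨Pi.single (⟨0, ht⟩ : Fin t) c, by simp [Lsum_apply]⟩
  have h := LinearMap.finrank_range_add_finrank_ker (Lsum t)
  rw [hsurj] at h
  simp [finrank_top, Module.finrank_pi] at h ⊢
  omega

lemma ncard_affine (t : ℕ) (F : AffineSubspace (ZMod 2) (Fin t → ZMod 2))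
    (hne : (F : Set (Fin t → ZMod 2)).Nonempty) :
    Set.ncard (F : Set (Fin t → ZMod 2)) = 2 ^ Module.finrank (ZMod 2) F.direction := by
  obtain ⟨p, hp⟩ := hne
  have h1 : (F.direction : Set (Fin t → ZMod 2)) = (· -ᵥ p) '' F :=
    AffineSubspace.coe_direction_eq_vsub_set_right hp
  have h2 : Set.ncard (F.direction : Set (Fin t → ZMod 2)) = Set.ncard (F : Set (Fin t → ZMod 2)) := by
    rw [h1]; exact Set.ncard_image_of_injective _ (fun a b h => by simpa using h)
  rw [← h2, ← Nat.card_coe_set_eq]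
  letI : Fintype F.direction := Fintype.ofFinite _
  have h3 : Fintype.card F.direction = Fintype.card (ZMod 2) ^ Module.finrank (ZMod 2) F.direction :=
    Module.card_eq_pow_finrank (K := ZMod 2)
  rw [Nat.card_eq_fintype_card]
  simp only [SetLike.coe_sort_coe]
  rw [h3, ZMod.card]

/-- Let `F ⊆ F₂^t` be a nonempty affine subspace contained in the
fixed-parity hyperplane `{z : ⊕ᵢ zᵢ = b}`, let `1 ≤ w ≤ t−1` with `b ≡ w (mod 2)`, and
suppose `F` contains at least one vector of Hamming weight `w`. Then a uniformly random
element of `F` has Hamming weight exactly `w` with probability at least `1/2^{t−2}`. -/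
theorem stmt12 (t : ℕ) (b : ZMod 2)
    (F : AffineSubspace (ZMod 2) (Fin t → ZMod 2))
    (hne : (F : Set (Fin t → ZMod 2)).Nonempty)
    (hsub : ∀ z ∈ F, ∑ i, z i = b)
    (w : ℕ) (hw1 : 1 ≤ w) (hw2 : w ≤ t - 1) (hbw : b = (w : ZMod 2))
    (hone : ∃ z ∈ F, ((univ : Finset (Fin t)).filter (fun i => z i = 1)).card = w) :
    (Set.ncard {z ∈ (F : Set (Fin t → ZMod 2)) |
        ((univ : Finset (Fin t)).filter (fun i => z i = 1)).card = w} : ℝ)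
        / (Set.ncard (F : Set (Fin t → ZMod 2)) : ℝ)
      ≥ 1 / 2 ^ (t - 2) := by
  have ht2 : 2 ≤ t := by omega
  obtain ⟨p, hp⟩ := hne
  set S : Set (Fin t → ZMod 2) := {z ∈ (F : Set (Fin t → ZMod 2)) |
      ((univ : Finset (Fin t)).filter (fun i => z i = 1)).card = w} with hS
  -- direction is inside kernel
  have hdirle : F.direction ≤ LinearMap.ker (Lsum t) := by
    intro v hv
    rw [AffineSubspace.mem_direction_iff_eq_vsub ⟨p, hp⟩] at hv
    obtain ⟨z1, hz1, z2, hz2, rfl⟩ := hv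
    rw [LinearMap.mem_ker, vsub_eq_sub, map_sub, Lsum_apply, Lsum_apply,
      hsub z1 hz1, hsub z2 hz2, sub_self]
  set d := Module.finrank (ZMod 2) F.direction with hd
  have hdle : d ≤ t - 1 := by
    have := Submodule.finrank_mono hdirle
    rwa [finrank_ker_Lsum t (by omega)] at this
  have hcardF : Set.ncard (F : Set (Fin t → ZMod 2)) = 2 ^ d :=
    ncard_affine t F ⟨p, hp⟩
  obtain ⟨z, hzF, hzw⟩ := hone
  have hzS : z ∈ S := ⟨hzF, hzw⟩
  have hSfin : S.Finite := Set.toFinite S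
  have hnum1 : 1 ≤ S.ncard := (Set.ncard_pos hSfin).mpr ⟨z, hzS⟩
  by_cases hcase : d ≤ t - 2
  · -- small subspace case
    rw [hcardF, ge_iff_le, div_le_div_iff₀ (by positivity) (by positivity)]
    push_cast
    have h1 : (2:ℝ) ^ d ≤ 2 ^ (t - 2) := by
      apply pow_le_pow_right₀ (by norm_num) hcase
    have h2 : (1:ℝ) ≤ (S.ncard : ℝ) := by exact_mod_cast hnum1
    nlinarith [pow_pos (show (0:ℝ) < 2 by norm_num) (t-2)]
  · -- F is the whole hyperplane
    have hdeq : d = t - 1 := by omega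
    have hdir_eq : F.direction = LinearMap.ker (Lsum t) :=
      Submodule.eq_of_le_of_finrank_le hdirle
        (by rw [finrank_ker_Lsum t (by omega), ← hd, hdeq])
    have hFeq : (F : Set (Fin t → ZMod 2)) = {z | ∑ i, z i = b} := by
      ext y
      constructor
      · exact fun hy => hsub y hy
      · intro hy
        have hmem : y - p ∈ F.direction := by
          rw [hdir_eq, LinearMap.mem_ker, map_sub, Lsum_apply, Lsum_apply,
            hy, hsub p hp, sub_self]
        have := AffineSubspace.vadd_mem_of_mem_direction hmem hp
        simpa using this
    -- build a second weight-w vector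
    have hzero : ∀ a : ZMod 2, a ≠ 1 → a = 0 := by decide
    have hifilter : ((univ : Finset (Fin t)).filter (fun i => z i = 1)).Nonempty := by
      rw [← Finset.card_pos, hzw]; omega
    obtain ⟨i, hi⟩ := hifilter
    have hzi : z i = 1 := (Finset.mem_filter.mp hi).2
    have hjex : ∃ j, z j ≠ 1 := by
      by_contra h
      push_neg at h
      have : ((univ : Finset (Fin t)).filter (fun i => z i = 1)) = univ := by
        apply Finset.filter_true_of_mem; intro k _; exact h k
      rw [this, Finset.card_univ, Fintype.card_fin] at hzw
      omega
    obtain ⟨j, hj⟩ := hjex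
    have hzj : z j = 0 := hzero _ hj
    have hij : i ≠ j := fun h => by rw [h, hzj] at hzi; exact zero_ne_one hzi
    set z' : Fin t → ZMod 2 := z + Pi.single i 1 + Pi.single j 1 with hz'
    have hz'i : z' i = 0 := by
      rw [hz']
      simp only [Pi.add_apply]
      rw [hzi, Pi.single_eq_same, Pi.single_eq_of_ne hij]
      decide
    have hz'j : z' j = 1 := by
      rw [hz']
      simp only [Pi.add_apply]
      rw [hzj, Pi.single_eq_same, Pi.single_eq_of_ne (Ne.symm hij)]
      decide
    have hz'k : ∀ k, k ≠ i → k ≠ j → z' k = z k := by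
      intro k hki hkj
      simp [hz', Pi.single_eq_of_ne hki, Pi.single_eq_of_ne hkj]
    have hz'F : z' ∈ F := by
      rw [← SetLike.mem_coe, hFeq]
      have : ∑ k, z' k = ∑ k, z k + 1 + 1 := by
        simp [hz', Finset.sum_add_distrib, Finset.sum_pi_single]
      rw [Set.mem_setOf_eq, this, hsub z hzF, add_assoc,
        show (1:ZMod 2) + 1 = 0 from by decide, add_zero]
    have hz'w : ((univ : Finset (Fin t)).filter (fun k => z' k = 1)).card = w := by
      have hset : ((univ : Finset (Fin t)).filter (fun k => z' k = 1)) =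
          insert j (((univ : Finset (Fin t)).filter (fun k => z k = 1)).erase i) := by
        ext k
        simp only [Finset.mem_filter, Finset.mem_univ, true_and, Finset.mem_insert,
          Finset.mem_erase]
        by_cases hki : k = i
        · subst hki
          simp [hz'i, hij]
        · by_cases hkj : k = j
          · subst hkj; simp [hz'j]
          · rw [hz'k k hki hkj]; simp [hki, hkj]
      rw [hset, Finset.card_insert_of_notMem, Finset.card_erase_of_mem hi, hzw]
      · omega
      · simp [hij.symm, Finset.mem_erase, hzj]
    have hz'z : z' ≠ z := fun h => by rw [h] at hz'i; rw [hz'i] at hzi; exact one_ne_zero hzi.symm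
    have hnum2 : 2 ≤ S.ncard := by
      have := (Set.one_lt_ncard hSfin).mpr ⟨z', ⟨hz'F, hz'w⟩, z, hzS, hz'z⟩
      omega
    rw [hcardF, ge_iff_le, div_le_div_iff₀ (by positivity) (by positivity)]
    push_cast
    have h2 : (2:ℝ) ≤ (S.ncard : ℝ) := by exact_mod_cast hnum2
    have hpow : (2:ℝ) ^ d = 2 * 2 ^ (t - 2) := by
      rw [hdeq, show t - 1 = (t - 2) + 1 from by omega, pow_succ]; ring
    rw [hpow]
    nlinarith [pow_pos (show (0:ℝ) < 2 from by norm_num) (t - 2)]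
end

section
/- Fix q ≥ 2. Under the dictatorship-test distribution with a parity h having K active coordinates and letting ψ* = q·c₀ + K (mod 2), the random vector (h(x^{(1)}), …, h(x^{(q)})) ∈ F₂^q is ε-close in the sense of characters to the uniform distribution D̄ on {z ∈ F₂^q : ⊕_j z_j = ψ*}: for every S ⊊ [q] nonempty, |E[(−1)^{⊕_{j∈S} Z_j}]| ≤ exp(−2K/q), while E_{D̄}[(−1)^{⊕_{j∈S} z_j}] = 0, and both distributions give the character of the full set [q] the same value (−1)^{ψ*}. -/
open Finset

noncomputable def sg' : ZMod 2 → ℝ := fun a => if a = 0 then 1 else -1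

lemma two_eq_zero' : (1:ZMod 2) + 1 = 0 := by decide

lemma sg'_zero : sg' 0 = 1 := by simp [sg']

lemma sg'_one : sg' 1 = -1 := by simp [sg']

lemma sg'_add (a b : ZMod 2) : sg' (a + b) = sg' a * sg' b := by
  rcases (by decide : ∀ a : ZMod 2, a = 0 ∨ a = 1) a with rfl | rfl <;> rcases (by decide : ∀ a : ZMod 2, a = 0 ∨ a = 1) b with rfl | rfl <;> simp +decide [sg', two_eq_zero']

lemma sg'_add_one (a : ZMod 2) : sg' (a + 1) = - sg' a := by
  rcases (by decide : ∀ a : ZMod 2, a = 0 ∨ a = 1) a with rfl | rfl <;> simp +decide [sg', two_eq_zero']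

lemma sg'_abs (a : ZMod 2) : |sg' a| = 1 := by
  rcases (by decide : ∀ a : ZMod 2, a = 0 ∨ a = 1) a with rfl | rfl <;> simp +decide [sg']

lemma sg'_sum {ι : Type*} (s : Finset ι) (f : ι → ZMod 2) :
    sg' (∑ i ∈ s, f i) = ∏ i ∈ s, sg' (f i) := by
  classical
  induction s using Finset.induction with
  | empty => simp [sg'_zero]
  | insert a s hns ih => simp [Finset.sum_insert hns, Finset.prod_insert hns, sg'_add, ih]

lemma zmod_ne_iff' (a b : ZMod 2) : a ≠ b ↔ a = b + 1 := by revert a b; decide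

lemma zmod_eq_zero_of_ne_one (a : ZMod 2) (h : a ≠ 1) : a = 0 := by revert a; decide

lemma card_hyp (q : ℕ) (hq : 1 ≤ q) (ψ : ZMod 2) :
    ((univ : Finset (Fin q → ZMod 2)).filter (fun z => ∑ j, z j = ψ)).card = 2 ^ (q-1) := by
  classical
  set j0 : Fin q := ⟨0, hq⟩
  set g : (Fin q → ZMod 2) → (Fin q → ZMod 2) :=
    fun z j => z j + (if j = j0 then 1 else 0) with hg
  have hsum : ∀ z : Fin q → ZMod 2, ∑ j, g z j = (∑ j, z j) + 1 := by
    intro z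
    simp only [hg, Finset.sum_add_distrib]
    congr 1
    simp
  have hcard : ∀ φ : ZMod 2,
      ((univ : Finset (Fin q → ZMod 2)).filter (fun z => ∑ j, z j = φ)).card
      = ((univ : Finset (Fin q → ZMod 2)).filter (fun z => ∑ j, z j = φ + 1)).card := by
    intro φ
    apply Finset.card_nbij' g g
    · intro z hz
      simp only [Finset.mem_coe, Finset.mem_filter, Finset.mem_univ, true_and] at hz ⊢
      rw [hsum, hz]
    · intro z hz
      simp only [Finset.mem_coe, Finset.mem_filter, Finset.mem_univ, true_and] at hz ⊢
      rw [hsum, hz]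
      rw [add_assoc, two_eq_zero', add_zero]
    · intro z _
      funext j
      simp only [hg]
      rcases eq_or_ne j j0 with h | h <;> simp [h, two_eq_zero', add_assoc]
    · intro z _
      funext j
      simp only [hg]
      rcases eq_or_ne j j0 with h | h <;> simp [h, two_eq_zero', add_assoc]
  have hsplit := Finset.card_filter_add_card_filter_not
      (s := (univ : Finset (Fin q → ZMod 2))) (p := fun z => ∑ j, z j = ψ)
  have hne : (univ : Finset (Fin q → ZMod 2)).filter (fun z => ¬ (∑ j, z j = ψ))
      = (univ : Finset (Fin q → ZMod 2)).filter (fun z => ∑ j, z j = ψ + 1) := by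
    apply Finset.filter_congr
    intro z _
    simpa using zmod_ne_iff' (∑ j, z j) ψ
  rw [hne, ← hcard ψ] at hsplit
  have hcardU : Fintype.card (Fin q → ZMod 2) = 2 ^ q := by simp [Fintype.card_fun, ZMod.card]
  rw [Finset.card_univ, hcardU] at hsplit
  have h2 : 2 ^ q = 2 * 2 ^ (q - 1) := by
    conv_lhs => rw [← Nat.sub_add_cancel hq]
    rw [pow_succ']
  generalize hA : ((univ : Finset (Fin q → ZMod 2)).filter
      (fun z => ∑ j, z j = ψ)).card = A at hsplit ⊢
  clear_value j0 g
  clear hcard hsum hne hcardU hA hg g j0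
  omega

lemma hyp_char_zero (q : ℕ) (ψ : ZMod 2) (S : Finset (Fin q))
    (j0 : Fin q) (hj0 : j0 ∈ S) (j1 : Fin q) (hj1 : j1 ∉ S) :
    ∑ z ∈ (univ : Finset (Fin q → ZMod 2)).filter (fun z => ∑ j, z j = ψ),
      sg' (∑ j ∈ S, z j) = 0 := by
  classical
  set g : (Fin q → ZMod 2) → (Fin q → ZMod 2) :=
    fun z j => z j + (if j = j0 ∨ j = j1 then 1 else 0) with hgdef
  have hS : ∀ z : Fin q → ZMod 2, ∑ j ∈ S, g z j = (∑ j ∈ S, z j) + 1 := by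
    intro z
    simp only [hgdef, Finset.sum_add_distrib]
    congr 1
    have : ∀ j ∈ S, (if j = j0 ∨ j = j1 then (1:ZMod 2) else 0) = if j = j0 then 1 else 0 := by
      intro j hj
      rcases eq_or_ne j j1 with rfl | h
      · exact absurd hj hj1
      · simp [h]
    rw [Finset.sum_congr rfl this, Finset.sum_ite_eq' S j0 (fun _ => (1:ZMod 2))]
    simp [hj0]
  have hU : ∀ z : Fin q → ZMod 2, ∑ j, g z j = ∑ j, z j := by
    intro z
    simp only [hgdef, Finset.sum_add_distrib]
    have : ∀ j : Fin q, (if j = j0 ∨ j = j1 then (1:ZMod 2) else 0)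
        = (if j = j0 then (1:ZMod 2) else 0) + (if j = j1 then 1 else 0) := by
      intro j
      rcases eq_or_ne j j0 with rfl | h0 <;> rcases eq_or_ne j j1 with rfl | h1 <;>
        simp_all [two_eq_zero']
    rw [Finset.sum_congr rfl (fun j _ => this j), Finset.sum_add_distrib,
      Finset.sum_ite_eq' univ j0 (fun _ => (1:ZMod 2)),
      Finset.sum_ite_eq' univ j1 (fun _ => (1:ZMod 2))]
    simp [two_eq_zero']
  have hgg : ∀ z, g (g z) = z := by
    intro z
    funext j
    simp only [hgdef]
    rcases em (j = j0 ∨ j = j1) with h | h <;> simp [h, add_assoc, two_eq_zero']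
  apply Finset.sum_involution (fun z _ => g z)
  · intro z _
    rw [hS, sg'_add_one]
    ring
  · intro z _ _ hc
    have := congrFun hc j0
    simp only [hgdef] at this
    simp at this
  · intro z hz
    simp only [Finset.mem_filter, Finset.mem_univ, true_and] at hz ⊢
    rw [hU]; exact hz
  · intro z _
    exact hgg z

lemma key_sum (M q : ℕ) (c₀ : ZMod 2) (c : Fin M → ZMod 2)
    (x : (Fin M → Fin q) → Fin q → Fin M → ZMod 2)
    (hx : ∀ σ j i, x σ j i = if σ i = j then 1 else 0)
    (h : (Fin M → ZMod 2) → ZMod 2)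
    (hh : ∀ y, h y = c₀ + ∑ i, c i * y i)
    (S : Finset (Fin q)) (σ : Fin M → Fin q) :
    ∑ j ∈ S, h (x σ j) = S.card • c₀ + ∑ i, c i * (if σ i ∈ S then 1 else 0) := by
  classical
  have : ∀ j ∈ S, h (x σ j) = c₀ + ∑ i, c i * (if σ i = j then 1 else 0) := by
    intro j _
    rw [hh]
    congr 1
    exact Finset.sum_congr rfl fun i _ => by rw [hx]
  rw [Finset.sum_congr rfl this, Finset.sum_add_distrib, Finset.sum_const]
  congr 1
  rw [Finset.sum_comm]
  refine Finset.sum_congr rfl fun i _ => ?_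
  rw [← Finset.mul_sum, Finset.sum_ite_eq S (σ i) (fun _ => (1:ZMod 2))]

lemma dict_sum (M q : ℕ) (c₀ : ZMod 2) (c : Fin M → ZMod 2)
    (x : (Fin M → Fin q) → Fin q → Fin M → ZMod 2)
    (hx : ∀ σ j i, x σ j i = if σ i = j then 1 else 0)
    (h : (Fin M → ZMod 2) → ZMod 2)
    (hh : ∀ y, h y = c₀ + ∑ i, c i * y i)
    (S : Finset (Fin q)) :
    ∑ σ : Fin M → Fin q, sg' (∑ j ∈ S, h (x σ j))
      = sg' (S.card • c₀)
        * ∏ i : Fin M, (∑ t : Fin q, sg' (c i * (if t ∈ S then 1 else 0))) := by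
  classical
  have step : ∀ σ : Fin M → Fin q, sg' (∑ j ∈ S, h (x σ j))
      = sg' (S.card • c₀) * ∏ i : Fin M, sg' (c i * (if σ i ∈ S then 1 else 0)) := by
    intro σ
    rw [key_sum M q c₀ c x hx h hh S σ, sg'_add, sg'_sum]
  rw [Finset.sum_congr rfl fun σ _ => step σ, ← Finset.mul_sum]
  congr 1
  exact (Fintype.prod_sum (fun i t => sg' (c i * (if t ∈ S then 1 else 0)))).symm

/-- Fix `q ≥ 2`. Under the dictatorship-test distribution (uniform over
`σ : [M] → [q]`), with a parity `h` having `K` active coordinates and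
`ψ* = q·c₀ + K (mod 2)`, the vector `(Z_1, …, Z_q) = (h(x^{(1)}), …, h(x^{(q)}))` is close
in the sense of characters to the uniform distribution `D̄` on
`{z ∈ F₂^q : ⊕_j z_j = ψ*}`: for every nonempty `S ⊊ [q]`,
`|E[(−1)^{⊕_{j∈S} Z_j}]| ≤ exp(−2K/q)` while `E_{D̄}[(−1)^{⊕_{j∈S} z_j}] = 0`, and both
distributions give the character of the full set `[q]` the value `(−1)^{ψ*}`. -/
theorem stmt16 (M q : ℕ) (hM : 1 ≤ M) (hq : 2 ≤ q)
    (c₀ : ZMod 2) (c : Fin M → ZMod 2) (K : ℕ)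
    (hK : K = ((univ : Finset (Fin M)).filter (fun i => c i = 1)).card)
    (x : (Fin M → Fin q) → Fin q → Fin M → ZMod 2)
    (hx : ∀ σ j i, x σ j i = if σ i = j then 1 else 0)
    (h : (Fin M → ZMod 2) → ZMod 2)
    (hh : ∀ y, h y = c₀ + ∑ i, c i * y i)
    (ψ : ZMod 2) (hψ : ψ = (q : ZMod 2) * c₀ + (K : ZMod 2))
    (sgn : ZMod 2 → ℝ) (hsgn : ∀ a, sgn a = if a = 0 then 1 else -1) :
    (∀ S : Finset (Fin q), S.Nonempty → S ⊂ univ →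
      |(∑ σ : Fin M → Fin q, sgn (∑ j ∈ S, h (x σ j))) / (q : ℝ) ^ M|
          ≤ Real.exp (-(2 * K) / q) ∧
      (∑ z ∈ (univ : Finset (Fin q → ZMod 2)).filter (fun z => ∑ j, z j = ψ),
          sgn (∑ j ∈ S, z j)) / (2 : ℝ) ^ (q - 1) = 0) ∧
    (∑ σ : Fin M → Fin q, sgn (∑ j, h (x σ j))) / (q : ℝ) ^ M = sgn ψ ∧
    (∑ z ∈ (univ : Finset (Fin q → ZMod 2)).filter (fun z => ∑ j, z j = ψ),
        sgn (∑ j, z j)) / (2 : ℝ) ^ (q - 1) = sgn ψ := by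
  classical
  have hsg : sgn = sg' := funext fun a => (hsgn a).trans rfl
  subst hsg
  have hq0 : (0:ℝ) < q := by positivity
  have hKM : K ≤ M := by
    rw [hK]
    exact (Finset.card_filter_le _ _).trans (by simp)
  -- the total parity is ψ
  have htot : ∀ σ : Fin M → Fin q, ∑ j, h (x σ j) = ψ := by
    intro σ
    rw [key_sum M q c₀ c x hx h hh univ σ]
    have h1 : ∑ i, c i * (if σ i ∈ (univ : Finset (Fin q)) then (1:ZMod 2) else 0)
        = (K : ZMod 2) := by
      simp only [Finset.mem_univ, if_true, mul_one]
      have : ∀ i : Fin M, c i = if c i = 1 then (1:ZMod 2) else 0 := by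
        intro i
        rcases eq_or_ne (c i) 1 with h | h
        · simp [h]
        · simp [h, zmod_eq_zero_of_ne_one _ h]
      rw [Finset.sum_congr rfl fun i _ => this i, Finset.sum_boole, hK]
    rw [h1, hψ, Finset.card_univ, Fintype.card_fin, nsmul_eq_mul]
  have hcardfun : (Fintype.card (Fin M → Fin q) : ℝ) = (q:ℝ) ^ M := by
    simp [Fintype.card_fun]
  refine ⟨?_, ?_, ?_⟩
  · -- proper nonempty S
    intro S hSne hSproper
    obtain ⟨j0, hj0⟩ := hSne
    obtain ⟨j1, _, hj1⟩ := Finset.exists_of_ssubset hSproper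
    constructor
    · -- character bound
      set s : ℕ := S.card with hs
      have hs1 : 1 ≤ s := Finset.card_pos.2 ⟨j0, hj0⟩
      have hsq : s ≤ q - 1 := by
        have := Finset.card_lt_card hSproper
        simp [Finset.card_univ] at this
        omega
      have inner : ∀ i : Fin M,
          (∑ t : Fin q, sg' (c i * (if t ∈ S then 1 else 0)))
          = if c i = 1 then ((q:ℝ) - 2*s) else (q:ℝ) := by
        intro i
        have e1 : ∀ t : Fin q, sg' (c i * (if t ∈ S then 1 else 0))
            = if t ∈ S then sg' (c i) else 1 := by
          intro t
          split_ifs <;> simp [sg'_zero]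
        rw [Finset.sum_congr rfl fun t _ => e1 t, Finset.sum_ite, Finset.sum_const,
          Finset.sum_const]
        have c1 : ((univ : Finset (Fin q)).filter (fun t => t ∈ S)).card = s := by
          simp [Finset.filter_mem_eq_inter, hs]
        have c2 : ((univ : Finset (Fin q)).filter (fun t => ¬ t ∈ S)).card = q - s := by
          have := Finset.card_filter_add_card_filter_not
            (s := (univ : Finset (Fin q))) (p := fun t => t ∈ S)
          simp only [Finset.card_univ, Fintype.card_fin] at this
          rw [c1] at this
          omega
        rw [c1, c2]
        have hsqle : s ≤ q := by omega
        split_ifs with hc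
        · rw [hc, sg'_one, nsmul_eq_mul, nsmul_eq_mul, Nat.cast_sub hsqle]
          ring
        · rw [zmod_eq_zero_of_ne_one _ hc, sg'_zero, nsmul_eq_mul, nsmul_eq_mul,
            Nat.cast_sub hsqle]
          ring
      rw [dict_sum M q c₀ c x hx h hh S]
      rw [Finset.prod_congr rfl fun i _ => inner i, Finset.prod_ite, Finset.prod_const,
        Finset.prod_const]
      rw [← hK]
      have cM : ((univ : Finset (Fin M)).filter (fun i => ¬ c i = 1)).card = M - K := by
        have := Finset.card_filter_add_card_filter_not
          (s := (univ : Finset (Fin M))) (p := fun i => c i = 1)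
        simp only [Finset.card_univ, Fintype.card_fin] at this
        omega
      rw [cM]
      -- now bound
      have hqM : (q:ℝ) ^ M = (q:ℝ) ^ (M - K) * (q:ℝ) ^ K := by
        rw [← pow_add]
        congr 1
        omega
      have hqMK : (0:ℝ) < (q:ℝ) ^ (M - K) := by positivity
      have hqK : (0:ℝ) < (q:ℝ) ^ K := by positivity
      have heq : |sg' (S.card • c₀) * (((q:ℝ) - 2*(s:ℝ)) ^ K * (q:ℝ) ^ (M-K)) / (q:ℝ) ^ M|
          = (|(q:ℝ) - 2*(s:ℝ)| / q) ^ K := by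
        rw [abs_div, abs_mul, sg'_abs, one_mul, abs_mul, abs_pow, abs_pow, abs_pow,
          abs_of_pos hq0, hqM, div_pow]
        rw [mul_comm ((q:ℝ) ^ (M-K)) ((q:ℝ) ^ K)]
        exact mul_div_mul_right _ _ (ne_of_gt hqMK)
      rw [heq]
      have habs : |(q:ℝ) - 2*s| ≤ (q:ℝ) - 2 := by
        rw [abs_le]
        constructor
        · have hle : (s:ℝ) ≤ (q:ℝ) - 1 := by
            have h' : (s:ℝ) ≤ ((q - 1 : ℕ) : ℝ) := by exact_mod_cast hsq
            rw [Nat.cast_sub (by omega)] at h'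
            simpa using h'
          nlinarith
        · have hge : (1:ℝ) ≤ (s:ℝ) := by exact_mod_cast hs1
          nlinarith
      have base1 : (0:ℝ) ≤ |(q:ℝ) - 2*s| / q := by positivity
      have e1 : |(q:ℝ) - 2*s| / q ≤ ((q:ℝ) - 2) / q := by gcongr
      have e2 : ((q:ℝ) - 2) / q ≤ Real.exp (-2/q) := by
        have hrw : ((q:ℝ) - 2) / q = -2/q + 1 := by field_simp; ring
        rw [hrw]
        exact Real.add_one_le_exp _
      have e3 : (|(q:ℝ) - 2*s| / q) ^ K ≤ (Real.exp (-2/q)) ^ K :=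
        pow_le_pow_left₀ base1 (e1.trans e2) K
      refine e3.trans (le_of_eq ?_)
      rw [← Real.exp_nat_mul]
      congr 1
      ring
    · -- D̄ character is zero
      rw [hyp_char_zero q ψ S j0 hj0 j1 hj1, zero_div]
  · -- full character, dictatorship side
    rw [Finset.sum_congr rfl fun σ _ => by rw [htot σ], Finset.sum_const, Finset.card_univ,
      nsmul_eq_mul, hcardfun]
    field_simp
  · -- full character, D̄ side
    have hmem : ∀ z ∈ (univ : Finset (Fin q → ZMod 2)).filter (fun z => ∑ j, z j = ψ),
        sg' (∑ j, z j) = sg' ψ := by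
      intro z hz
      simp only [Finset.mem_filter] at hz
      rw [hz.2]
    rw [Finset.sum_congr rfl hmem, Finset.sum_const, card_hyp q (by omega) ψ, nsmul_eq_mul]
    push_cast
    field_simp
end
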